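/- Let n be a positive integer divisible by 8, 1 ≤ k_1 ≤ n/2, and let A ∈ M_{(k_1−1)×(n−k_1)}(Z) have all entries 0 or 1, with I_{k_1−1} + AA^t ≡ 0 (mod 2), diag(I_{k_1−1} + AA^t) ≡ 0 (mod 4), and 𝟏 + 𝟏A^t ≡ 0 (mod 4). For N ∈ M_{(k_1−1)×(n−k_1)}(Z), let C be the quaternary code of length n generated by the rows of the block matrix with first row [1 | 𝟏 | 𝟏] and remaining rows [0 | I_{k_1−1} | A + 2N]. Then C is even if and only if 𝟏N^t ≡ 0 (mod 2) and AN^t + NA^t + Diag(AN^t) ≡ (1/2)(I + AA^t) + (1/4)(I + Diag(AA^t)) (mod 2). -/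

import Mathlib

open scoped BigOperators

set_option maxHeartbeats 1000000

namespace Paper

/-- Self-orthogonality of a set of vectors w.r.t. the standard inner product. -/
def sorth {m : ℕ} {ι : Type} [Fintype ι] (S : Set (ι → ZMod m)) : Prop :=
  ∀ x ∈ S, ∀ y ∈ S, ∑ i, x i * y i = 0

/-- The dual (as a set) of a set of vectors w.r.t. the standard inner product. -/
def dualSet {m : ℕ} {ι : Type} [Fintype ι] (S : Set (ι → ZMod m)) : Set (ι → ZMod m) :=
  {x | ∀ y ∈ S, ∑ i, x i * y i = 0}

/-- A set of vectors is doubly even if every element has Hamming weight divisible by 4. -/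
def doublyEven {m : ℕ} {ι : Type} [Fintype ι] (S : Set (ι → ZMod m)) : Prop :=
  ∀ x ∈ S, 4 ∣ (Finset.univ.filter fun i => x i ≠ 0).card

/-- Coordinatewise reduction map `(Z_{p^2})^ι → (Z_p)^ι`. -/
def res (p : ℕ) [Fact p.Prime] {ι : Type} (v : ι → ZMod (p ^ 2)) : ι → ZMod p :=
  fun i => ZMod.castHom (dvd_pow_self p (by norm_num)) (ZMod p) (v i)

/-- The injection `(Z_p)^ι → (Z_{p^2})^ι` induced by `Z_p ≅ pZ_{p^2} ⊆ Z_{p^2}`. -/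
def iot (p : ℕ) {ι : Type} (v : ι → ZMod p) : ι → ZMod (p ^ 2) :=
  fun i => (p : ZMod (p ^ 2)) * (ZMod.cast (v i))

/-- Coordinatewise reduction map `(Z_4)^ι → (Z_2)^ι`. -/
def res4 {ι : Type} (v : ι → ZMod 4) : ι → ZMod 2 :=
  fun i => ZMod.castHom (by norm_num : (2:ℕ) ∣ 4) (ZMod 2) (v i)

/-- The injection `(Z_2)^ι → (Z_4)^ι`. -/
def iot4 {ι : Type} (v : ι → ZMod 2) : ι → ZMod 4 :=
  fun i => (2 : ZMod 4) * (ZMod.cast (v i))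

/-- Euclidean weight on `Z_4`. -/
def ewt (x : ZMod 4) : ℕ := if x = 0 then 0 else if x = 2 then 4 else 1

/-- A quaternary code is even if every codeword has Euclidean weight divisible by 8. -/
def evenCode {ι : Type} [Fintype ι] (S : Set (ι → ZMod 4)) : Prop :=
  ∀ x ∈ S, 8 ∣ ∑ i, ewt (x i)

/-- The code over `Z_q` generated by the rows of an integer matrix. -/
def intRowSpan (q : ℕ) {κ ι : Type} (G : Matrix κ ι ℤ) :
    Submodule (ZMod q) (ι → ZMod q) :=
  Submodule.span (ZMod q) (Set.range fun i => fun c => ((G i c : ℤ) : ZMod q))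

/-- The Gaussian binomial coefficient `[n choose k]_p`. -/
def gauss (p n k : ℕ) : ℚ :=
  ∏ i ∈ Finset.range k, ((p : ℚ) ^ n - (p : ℚ) ^ i) / ((p : ℚ) ^ k - (p : ℚ) ^ i)

/-- The integer generator matrix `[[1, 𝟏, 𝟏], [0, I, M]]`. -/
def genE (k r : ℕ) (M : Matrix (Fin k) (Fin r) ℤ) :
    Matrix (Unit ⊕ Fin k) (Unit ⊕ (Fin k ⊕ Fin r)) ℤ :=
  Matrix.fromBlocks (1 : Matrix Unit Unit ℤ) (Matrix.of fun _ _ => 1)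
    (0 : Matrix (Fin k) Unit ℤ)
    (Matrix.fromCols (1 : Matrix (Fin k) (Fin k) ℤ) M)


section Aux

/-- Lift of `ZMod 4` into `ZMod 8` via the natural representative. -/
def phi (x : ZMod 4) : ZMod 8 := (x.val : ZMod 8)

lemma phi_add_sq : ∀ x y : ZMod 4, phi (x+y) * phi (x+y) = phi x * phi x + phi y * phi y + 2 * phi x * phi y := by decide
lemma phi_smul_sq : ∀ c x : ZMod 4, phi (c*x) * phi (c*x) = phi c * phi c * (phi x * phi x) := by decide
lemma phi_b_addl : ∀ x y z : ZMod 4, 2 * phi (x+y) * phi z = 2 * phi x * phi z + 2 * phi y * phi z := by decide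
lemma phi_b_smull : ∀ c x z : ZMod 4, 2 * phi (c*x) * phi z = phi c * (2 * phi x * phi z) := by decide
lemma phi_b_addr : ∀ x y z : ZMod 4, 2 * phi z * phi (x+y) = 2 * phi z * phi x + 2 * phi z * phi y := by decide
lemma phi_b_smulr : ∀ c x z : ZMod 4, 2 * phi z * phi (c*x) = phi c * (2 * phi z * phi x) := by decide
lemma ewt_cast : ∀ x : ZMod 4, ((ewt x : ℕ) : ZMod 8) = phi x * phi x := by decide
lemma phi_zero : phi 0 = 0 := by decide

variable {ι : Type} [Fintype ι]

/-- Euclidean-weight quadratic form with values in `ZMod 8`. -/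
def Qf (x : ι → ZMod 4) : ZMod 8 := ∑ i, phi (x i) * phi (x i)

/-- Associated bilinear form with values in `ZMod 8`. -/
def Bf (x y : ι → ZMod 4) : ZMod 8 := ∑ i, 2 * phi (x i) * phi (y i)

lemma Qf_add (x y : ι → ZMod 4) : Qf (x + y) = Qf x + Qf y + Bf x y := by
  simp only [Qf, Bf, Pi.add_apply, phi_add_sq, Finset.sum_add_distrib]

lemma Qf_smul (c : ZMod 4) (x : ι → ZMod 4) : Qf (c • x) = phi c * phi c * Qf x := by
  simp only [Qf, Pi.smul_apply, smul_eq_mul, phi_smul_sq, Finset.mul_sum]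

lemma Qf_zero : Qf (0 : ι → ZMod 4) = 0 := by simp [Qf, phi_zero]

lemma Bf_addl (x y z : ι → ZMod 4) : Bf (x + y) z = Bf x z + Bf y z := by
  simp only [Bf, Pi.add_apply, phi_b_addl, Finset.sum_add_distrib]
lemma Bf_smull (c : ZMod 4) (x z : ι → ZMod 4) : Bf (c • x) z = phi c * Bf x z := by
  simp only [Bf, Pi.smul_apply, smul_eq_mul, phi_b_smull, Finset.mul_sum]
lemma Bf_addr (x y z : ι → ZMod 4) : Bf z (x + y) = Bf z x + Bf z y := by
  simp only [Bf, Pi.add_apply, phi_b_addr, Finset.sum_add_distrib]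
lemma Bf_smulr (c : ZMod 4) (x z : ι → ZMod 4) : Bf z (c • x) = phi c * Bf z x := by
  simp only [Bf, Pi.smul_apply, smul_eq_mul, phi_b_smulr, Finset.mul_sum]
lemma Bf_zeror (z : ι → ZMod 4) : Bf z 0 = 0 := by simp [Bf, phi_zero]
lemma Bf_zerol (z : ι → ZMod 4) : Bf 0 z = 0 := by simp [Bf, phi_zero]

lemma q_span_iff (S : Set (ι → ZMod 4)) :
    (∀ x ∈ Submodule.span (ZMod 4) S, Qf x = 0) ↔
      (∀ g ∈ S, Qf g = 0) ∧ ∀ g ∈ S, ∀ h ∈ S, Bf g h = 0 := by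
  constructor
  · intro H
    refine ⟨fun g hg => H g (Submodule.subset_span hg), fun g hg h hh => ?_⟩
    have h1 := H g (Submodule.subset_span hg)
    have h2 := H h (Submodule.subset_span hh)
    have h3 := H (g + h)
      (Submodule.add_mem _ (Submodule.subset_span hg) (Submodule.subset_span hh))
    rw [Qf_add, h1, h2, zero_add, zero_add] at h3
    exact h3
  · rintro ⟨hq, hb⟩ x hx
    have base : ∀ g ∈ S, ∀ y ∈ Submodule.span (ZMod 4) S, Bf g y = 0 := by
      intro g hg y hy
      induction hy using Submodule.span_induction with
      | mem z hz => exact hb g hg z hz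
      | zero => exact Bf_zeror g
      | add z w hz hw ihz ihw => rw [Bf_addr, ihz, ihw, add_zero]
      | smul c z hz ih => rw [Bf_smulr, ih, mul_zero]
    have key : ∀ y ∈ Submodule.span (ZMod 4) S,
        Qf y = 0 ∧ ∀ z ∈ Submodule.span (ZMod 4) S, Bf y z = 0 := by
      intro y hy
      induction hy using Submodule.span_induction with
      | mem g hg => exact ⟨hq g hg, base g hg⟩
      | zero => exact ⟨Qf_zero, fun z _ => Bf_zerol z⟩
      | add z w hz hw ihz ihw =>
        refine ⟨?_, fun u hu => ?_⟩
        · rw [Qf_add, ihz.1, ihw.1, ihz.2 w hw]; ring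
        · rw [Bf_addl, ihz.2 u hu, ihw.2 u hu, add_zero]
      | smul c z hz ih =>
        exact ⟨by rw [Qf_smul, ih.1, mul_zero],
          fun u hu => by rw [Bf_smull, ih.2 u hu, mul_zero]⟩
    exact (key x hx).1

lemma evenCode_iff_q (S : Set (ι → ZMod 4)) : evenCode S ↔ ∀ x ∈ S, Qf x = 0 := by
  refine forall₂_congr fun x _ => ?_
  rw [← ZMod.natCast_eq_zero_iff,
    show ((∑ i, ewt (x i) : ℕ) : ZMod 8) = Qf x from by
      push_cast; exact Finset.sum_congr rfl fun i _ => ewt_cast (x i)]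

lemma sq_cast (a : ℤ) : phi ((a : ZMod 4)) * phi ((a : ZMod 4)) = ((a * a : ℤ) : ZMod 8) := by
  obtain ⟨q, r, rfl, hr0, hr4⟩ : ∃ q r : ℤ, a = 4 * q + r ∧ 0 ≤ r ∧ r < 4 :=
    ⟨a / 4, a % 4, by omega, by omega, by omega⟩
  have h1 : (((4 * q + r : ℤ)) : ZMod 4) = ((r : ℤ) : ZMod 4) := by
    push_cast
    rw [show ((4 : ZMod 4)) = 0 from by decide]
    ring
  have h2 : (((4 * q + r) * (4 * q + r) : ℤ) : ZMod 8) = ((r * r : ℤ) : ZMod 8) := by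
    rw [show (4 * q + r) * (4 * q + r) = r * r + 8 * (2 * q * q + q * r) from by ring]
    push_cast
    rw [show ((8 : ZMod 8)) = 0 from by decide]
    ring
  rw [h1, h2]
  interval_cases r <;> decide

lemma bmul_cast (a b : ℤ) :
    2 * phi ((a : ZMod 4)) * phi ((b : ZMod 4)) = ((2 * (a * b) : ℤ) : ZMod 8) := by
  obtain ⟨q, r, rfl, hr0, hr4⟩ : ∃ q r : ℤ, a = 4 * q + r ∧ 0 ≤ r ∧ r < 4 :=
    ⟨a / 4, a % 4, by omega, by omega, by omega⟩
  obtain ⟨s, w, rfl, hw0, hw4⟩ : ∃ s w : ℤ, b = 4 * s + w ∧ 0 ≤ w ∧ w < 4 :=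
    ⟨b / 4, b % 4, by omega, by omega, by omega⟩
  have h1 : (((4 * q + r : ℤ)) : ZMod 4) = ((r : ℤ) : ZMod 4) := by
    push_cast; rw [show ((4 : ZMod 4)) = 0 from by decide]; ring
  have h1' : (((4 * s + w : ℤ)) : ZMod 4) = ((w : ℤ) : ZMod 4) := by
    push_cast; rw [show ((4 : ZMod 4)) = 0 from by decide]; ring
  have h2 : ((2 * ((4 * q + r) * (4 * s + w)) : ℤ) : ZMod 8) = ((2 * (r * w) : ℤ) : ZMod 8) := by
    rw [show 2 * ((4 * q + r) * (4 * s + w)) = 2 * (r * w) + 8 * (4 * q * s + q * w + r * s)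
      from by ring]
    push_cast
    rw [show ((8 : ZMod 8)) = 0 from by decide]
    ring
  rw [h1, h1', h2]
  interval_cases r <;> interval_cases w <;> decide

lemma Qf_row {κ : Type} (G : Matrix κ ι ℤ) (u : κ) :
    Qf (fun c => ((G u c : ℤ) : ZMod 4)) = ((∑ c, G u c * G u c : ℤ) : ZMod 8) := by
  unfold Qf
  rw [Int.cast_sum]
  exact Finset.sum_congr rfl fun c _ => sq_cast (G u c)

lemma Bf_row {κ : Type} (G : Matrix κ ι ℤ) (u v : κ) :
    Bf (fun c => ((G u c : ℤ) : ZMod 4)) (fun c => ((G v c : ℤ) : ZMod 4))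
      = ((2 * ∑ c, G u c * G v c : ℤ) : ZMod 8) := by
  unfold Bf
  rw [Finset.mul_sum, Int.cast_sum]
  exact Finset.sum_congr rfl fun c _ => bmul_cast (G u c) (G v c)

lemma evenCode_intRowSpan_iff {κ : Type} (G : Matrix κ ι ℤ) :
    evenCode ((intRowSpan 4 G : Submodule (ZMod 4) (ι → ZMod 4)) : Set (ι → ZMod 4)) ↔
      (∀ u, (8 : ℤ) ∣ ∑ c, G u c * G u c) ∧
        ∀ u v, (8 : ℤ) ∣ 2 * ∑ c, G u c * G v c := by
  rw [evenCode_iff_q]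
  have h0 : (∀ x ∈ ((intRowSpan 4 G : Submodule (ZMod 4) (ι → ZMod 4)) : Set (ι → ZMod 4)),
      Qf x = 0) ↔
      ∀ x ∈ Submodule.span (ZMod 4) (Set.range fun u => fun c => ((G u c : ℤ) : ZMod 4)),
        Qf x = 0 := Iff.rfl
  rw [h0, q_span_iff]
  simp only [Set.forall_mem_range, Qf_row, Bf_row, ZMod.intCast_zmod_eq_zero_iff_dvd]
  norm_num

end Aux

section GenE

variable {k r : ℕ} (M : Matrix (Fin k) (Fin r) ℤ)

lemma genE_ll (u c : Unit) : genE k r M (Sum.inl u) (Sum.inl c) = 1 := by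
  simp [genE, Matrix.one_apply]
lemma genE_lr (u : Unit) (c : Fin k ⊕ Fin r) : genE k r M (Sum.inl u) (Sum.inr c) = 1 := by
  simp [genE]
lemma genE_rl (i : Fin k) (c : Unit) : genE k r M (Sum.inr i) (Sum.inl c) = 0 := by
  simp [genE]
lemma genE_rrl (i j : Fin k) :
    genE k r M (Sum.inr i) (Sum.inr (Sum.inl j)) = if i = j then 1 else 0 := by
  simp [genE, Matrix.fromCols_apply_inl, Matrix.one_apply]
lemma genE_rrr (i : Fin k) (j : Fin r) : genE k r M (Sum.inr i) (Sum.inr (Sum.inr j)) = M i j := by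
  simp [genE, Matrix.fromCols_apply_inr]

lemma sum_ll (u u' : Unit) :
    ∑ c, genE k r M (Sum.inl u) c * genE k r M (Sum.inl u') c = ((1 + k + r : ℕ) : ℤ) := by
  rw [Fintype.sum_sum_type, Fintype.sum_sum_type]
  simp only [genE_ll, genE_lr, mul_one, one_mul, Finset.sum_const, Finset.card_univ,
    Fintype.card_unit, Fintype.card_fin, smul_eq_mul]
  push_cast; ring

lemma sum_lr (u : Unit) (i : Fin k) :
    ∑ c, genE k r M (Sum.inl u) c * genE k r M (Sum.inr i) c = 1 + ∑ j, M i j := by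
  rw [Fintype.sum_sum_type, Fintype.sum_sum_type]
  simp [genE_ll, genE_lr, genE_rl, genE_rrl, genE_rrr, Finset.sum_ite_eq]

lemma sum_rl (u : Unit) (i : Fin k) :
    ∑ c, genE k r M (Sum.inr i) c * genE k r M (Sum.inl u) c = 1 + ∑ j, M i j := by
  rw [Fintype.sum_sum_type, Fintype.sum_sum_type]
  simp [genE_ll, genE_lr, genE_rl, genE_rrl, genE_rrr, Finset.sum_ite_eq]

lemma sum_rr (i j : Fin k) :
    ∑ c, genE k r M (Sum.inr i) c * genE k r M (Sum.inr j) c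
      = (if i = j then 1 else 0) + ∑ l, M i l * M j l := by
  rw [Fintype.sum_sum_type, Fintype.sum_sum_type]
  simp [genE_rl, genE_rrl, genE_rrr, ite_mul, mul_ite, Finset.sum_ite_eq]

end GenE

/-- the quaternary code generated by `[[1, 𝟏, 𝟏], [0, I, A + 2N]]` is even iff
`𝟏Nᵗ ≡ 0 (mod 2)` and `ANᵗ + NAᵗ + Diag(ANᵗ) ≡ (1/2)(I + AAᵗ) + (1/4)(I + Diag(AAᵗ)) (mod 2)`. -/
theorem stmt10 (n k1 : ℕ) (hn8 : 8 ∣ n) (hn : 0 < n) (hk1 : 1 ≤ k1) (hk : k1 ≤ n / 2)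
    (A : Matrix (Fin (k1 - 1)) (Fin (n - k1)) ℤ)
    (hA01 : ∀ i j, A i j = 0 ∨ A i j = 1)
    (h2 : ∀ i j, (2 : ℤ) ∣ ((1 + A * A.transpose : Matrix (Fin (k1 - 1)) (Fin (k1 - 1)) ℤ) i j))
    (h4 : ∀ i, (4 : ℤ) ∣ ((1 + A * A.transpose : Matrix (Fin (k1 - 1)) (Fin (k1 - 1)) ℤ) i i))
    (h14 : ∀ i, (4 : ℤ) ∣ (1 + ∑ j, A i j))
    (N : Matrix (Fin (k1 - 1)) (Fin (n - k1)) ℤ) :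
    evenCode ((intRowSpan 4 (genE (k1 - 1) (n - k1) (A + 2 • N)) :
        Submodule (ZMod 4) ((Unit ⊕ (Fin (k1 - 1) ⊕ Fin (n - k1))) → ZMod 4)) :
        Set ((Unit ⊕ (Fin (k1 - 1) ⊕ Fin (n - k1))) → ZMod 4))
      ↔ (∀ i, (2 : ℤ) ∣ ∑ j, N i j) ∧
        (∀ i j, (2 : ℤ) ∣
          ((A * N.transpose + N * A.transpose +
              Matrix.diagonal (fun l => (A * N.transpose) l l)
              : Matrix (Fin (k1 - 1)) (Fin (k1 - 1)) ℤ) i j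
            - (((1 + A * A.transpose : Matrix (Fin (k1 - 1)) (Fin (k1 - 1)) ℤ) i j) / 2
              + ((1 + Matrix.diagonal (fun l => (A * A.transpose) l l)
                  : Matrix (Fin (k1 - 1)) (Fin (k1 - 1)) ℤ) i j) / 4))) := by
  classical
  rw [evenCode_intRowSpan_iff]
  have hME : ∀ i j, (A + 2 • N) i j = A i j + 2 * N i j := by
    intro i j
    simp [Matrix.add_apply]
  have hsum : ∀ i, ∑ j, (A + 2 • N) i j = (∑ j, A i j) + 2 * ∑ j, N i j := by
    intro i
    simp only [hME]
    rw [Finset.sum_add_distrib, Finset.mul_sum]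
  have hsq : ∀ i j, ∑ l, (A + 2 • N) i l * (A + 2 • N) j l
      = (∑ l, A i l * A j l) + 2 * (∑ l, A i l * N j l) + 2 * (∑ l, N i l * A j l)
        + 4 * (∑ l, N i l * N j l) := by
    intro i j
    have h : ∀ l, (A + 2 • N) i l * (A + 2 • N) j l
        = A i l * A j l + 2 * (A i l * N j l) + 2 * (N i l * A j l)
          + 4 * (N i l * N j l) := by
      intro l; rw [hME, hME]; ring
    simp only [h, Finset.sum_add_distrib, Finset.mul_sum]
  have hXY : ∀ i, ∑ l, N i l * A i l = ∑ l, A i l * N i l :=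
    fun i => Finset.sum_congr rfl fun l _ => mul_comm _ _
  have hNsq : ∀ i, (2:ℤ) ∣ (∑ l, N i l * N i l) - ∑ l, N i l := by
    intro i
    rw [← Finset.sum_sub_distrib]
    refine Finset.dvd_sum fun l _ => ?_
    obtain ⟨c, hc⟩ := Int.even_mul_succ_self (N i l - 1)
    exact ⟨c, by linear_combination hc⟩
  have h4' : ∀ i, (4:ℤ) ∣ 1 + ∑ l, A i l * A i l := by
    intro i
    have h := h4 i
    simpa [Matrix.add_apply, Matrix.one_apply, Matrix.mul_apply,
      Matrix.transpose_apply] using h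
  have h2' : ∀ i j, i ≠ j → (2:ℤ) ∣ ∑ l, A i l * A j l := by
    intro i j hij
    have h := h2 i j
    simpa [Matrix.add_apply, Matrix.one_apply, hij, Matrix.mul_apply,
      Matrix.transpose_apply] using h
  have hRHS : ∀ i j, ((A * N.transpose + N * A.transpose +
              Matrix.diagonal (fun l => (A * N.transpose) l l)
              : Matrix (Fin (k1 - 1)) (Fin (k1 - 1)) ℤ) i j
            - (((1 + A * A.transpose : Matrix (Fin (k1 - 1)) (Fin (k1 - 1)) ℤ) i j) / 2
              + ((1 + Matrix.diagonal (fun l => (A * A.transpose) l l)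
                  : Matrix (Fin (k1 - 1)) (Fin (k1 - 1)) ℤ) i j) / 4))
      = ((∑ l, A i l * N j l) + (∑ l, N i l * A j l)
            + (if i = j then ∑ l, A i l * N i l else 0))
        - ((((if i = j then 1 else 0) + ∑ l, A i l * A j l)) / 2
           + (((if i = j then 1 else 0) + (if i = j then ∑ l, A i l * A i l else 0))) / 4) := by
    intro i j
    by_cases hij : i = j
    · subst hij
      simp [Matrix.add_apply, Matrix.one_apply, Matrix.diagonal_apply, Matrix.mul_apply,
        Matrix.transpose_apply]
    · simp [Matrix.add_apply, Matrix.one_apply, Matrix.diagonal_apply, Matrix.mul_apply,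
        Matrix.transpose_apply, hij]
  constructor
  · rintro ⟨H1, H2⟩
    have hSN : ∀ i, (2:ℤ) ∣ ∑ j, N i j := by
      intro i
      have h := H2 (Sum.inl ()) (Sum.inr i)
      rw [sum_lr, hsum] at h
      have h14i := h14 i
      omega
    refine ⟨hSN, fun i j => ?_⟩
    rw [hRHS]
    by_cases hij : i = j
    · subst hij
      simp only [eq_self_iff_true, if_true]
      have h := H1 (Sum.inr i)
      rw [sum_rr] at h
      simp only [eq_self_iff_true, if_true] at h
      rw [hsq, hXY] at h
      rw [hXY]
      have e1 := h4' i
      have e2 := hNsq i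
      have e3 := hSN i
      omega
    · simp only [if_neg hij]
      have h := H2 (Sum.inr i) (Sum.inr j)
      rw [sum_rr] at h
      simp only [if_neg hij] at h
      rw [hsq] at h
      have e1 := h2' i j hij
      omega
  · rintro ⟨R1, R2⟩
    have hn8' : (8:ℤ) ∣ ((1 + (k1-1) + (n-k1) : ℕ) : ℤ) := by
      have he : 1 + (k1-1) + (n-k1) = n := by omega
      rw [he]
      exact_mod_cast Int.natCast_dvd_natCast.mpr hn8
    have keyd : ∀ i, (8:ℤ) ∣ 1 + ∑ l, (A + 2 • N) i l * (A + 2 • N) i l := by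
      intro i
      rw [hsq, hXY]
      have hr := R2 i i
      rw [hRHS] at hr
      simp only [eq_self_iff_true, if_true] at hr
      rw [hXY] at hr
      have e1 := h4' i
      have e2 := hNsq i
      have e3 := R1 i
      omega
    have keyo : ∀ i, (8:ℤ) ∣ 2 * (1 + ∑ j, (A + 2 • N) i j) := by
      intro i
      rw [hsum]
      have e1 := h14 i
      have e2 := R1 i
      omega
    refine ⟨fun u => ?_, fun u v => ?_⟩
    · cases u with
      | inl u => rw [sum_ll]; exact hn8'
      | inr i =>
        rw [sum_rr]
        simp only [eq_self_iff_true, if_true]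
        exact keyd i
    · cases u with
      | inl u =>
        cases v with
        | inl v => rw [sum_ll]; exact dvd_mul_of_dvd_right hn8' 2
        | inr i => rw [sum_lr]; exact keyo i
      | inr i =>
        cases v with
        | inl v => rw [sum_rl]; exact keyo i
        | inr j =>
          rw [sum_rr]
          by_cases hij : i = j
          · subst hij
            simp only [eq_self_iff_true, if_true]
            have e1 := keyd i
            omega
          · simp only [if_neg hij]
            have hr := R2 i j
            rw [hRHS] at hr
            simp only [if_neg hij] at hr
            rw [hsq]
            have e1 := h2' i j hij
            omega


end Paper
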